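/- For all natural numbers x and y with x ≥ 2 and y ≥ 1, the following are equivalent: (i) y = x²; (ii) x divides y + x, x + 1 divides y + x, Nat.log 2 y ≤ 2 · Nat.log 2 x + 1, x + 2 divides y + 2x, and x + 3 divides y + 3x. -/
import Mathlib


theorem sq_characterization (x y : ℕ) (hx : 2 ≤ x) (hy : 1 ≤ y) :
    y = x ^ 2 ↔
      x ∣ y + x ∧ x + 1 ∣ y + x ∧ Nat.log 2 y ≤ 2 * Nat.log 2 x + 1 ∧
        x + 2 ∣ y + 2 * x ∧ x + 3 ∣ y + 3 * x := by
  constructor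
  · rintro rfl
    refine ⟨⟨x + 1, by ring⟩, ⟨x, by ring⟩, ?_, ⟨x, by ring⟩, ⟨x, by ring⟩⟩
    have hxlt : x < 2 ^ (Nat.log 2 x + 1) := Nat.lt_pow_succ_log_self (by norm_num) x
    have hsq : x ^ 2 < 2 ^ (2 * Nat.log 2 x + 2) := by
      have : 2 ^ (2 * Nat.log 2 x + 2) = 2 ^ (Nat.log 2 x + 1) * 2 ^ (Nat.log 2 x + 1) := by
        rw [← pow_add]; ring_nf
      rw [this]
      nlinarith
    have := Nat.log_lt_of_lt_pow (x := 2 * Nat.log 2 x + 2) (by positivity) hsq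
    omega
  · rintro ⟨h1, h2, h3, h4, h5⟩
    have hx0 : x ≠ 0 := by omega
    have hyx : y < 4 * x ^ 2 := by
      have h6 : y < 2 ^ (Nat.log 2 y + 1) := Nat.lt_pow_succ_log_self (by norm_num) y
      have h7 : 2 ^ Nat.log 2 x ≤ x := Nat.pow_log_le_self 2 hx0
      calc y < 2 ^ (Nat.log 2 y + 1) := h6
        _ ≤ 2 ^ (2 * Nat.log 2 x + 2) := Nat.pow_le_pow_right (by norm_num) (by omega)
        _ = 4 * (2 ^ Nat.log 2 x) ^ 2 := by rw [pow_add, ← pow_mul]; ring_nf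
        _ ≤ 4 * x ^ 2 := Nat.mul_le_mul_left 4 (Nat.pow_le_pow_left h7 2)
    obtain ⟨X, hX⟩ : ∃ X : ℤ, X = (x : ℤ) := ⟨_, rfl⟩
    obtain ⟨Y, hY⟩ : ∃ Y : ℤ, Y = (y : ℤ) := ⟨_, rfl⟩
    have hX2 : (2 : ℤ) ≤ X := by rw [hX]; exact_mod_cast hx
    have hY1 : (1 : ℤ) ≤ Y := by rw [hY]; exact_mod_cast hy
    have hYlt : Y < 4 * X ^ 2 := by rw [hX, hY]; exact_mod_cast hyx
    have c1 : X ∣ Y + X := by rw [hX, hY]; exact_mod_cast h1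
    have c2 : X + 1 ∣ Y + X := by rw [hX, hY]; exact_mod_cast h2
    have c4 : X + 2 ∣ Y + 2 * X := by rw [hX, hY]; exact_mod_cast h4
    have d1 : X ∣ Y - X ^ 2 := by
      have h : X ∣ X ^ 2 + X := ⟨X + 1, by ring⟩
      have := dvd_sub c1 h
      have he : Y + X - (X ^ 2 + X) = Y - X ^ 2 := by ring
      rwa [he] at this
    have d2 : X + 1 ∣ Y - X ^ 2 := by
      have h : X + 1 ∣ X ^ 2 + X := ⟨X, by ring⟩
      have := dvd_sub c2 h
      have he : Y + X - (X ^ 2 + X) = Y - X ^ 2 := by ring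
      rwa [he] at this
    have d4 : X + 2 ∣ Y - X ^ 2 := by
      have h : X + 2 ∣ X ^ 2 + 2 * X := ⟨X, by ring⟩
      have := dvd_sub c4 h
      have he : Y + 2 * X - (X ^ 2 + 2 * X) = Y - X ^ 2 := by ring
      rwa [he] at this
    have hcop : IsCoprime X (X + 1) := ⟨-1, 1, by ring⟩
    have d12 : X * (X + 1) ∣ Y - X ^ 2 := hcop.mul_dvd d1 d2
    obtain ⟨k, hk⟩ := d12
    have h2k : X + 2 ∣ 2 * k := by
      have h' : X + 2 ∣ (X + 2) * ((X - 1) * k) := ⟨(X - 1) * k, rfl⟩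
      have := dvd_sub (hk ▸ d4) h'
      have he : X * (X + 1) * k - (X + 2) * ((X - 1) * k) = 2 * k := by ring
      rwa [he] at this
    have dprod : X * (X + 1) * (X + 2) ∣ 2 * (Y - X ^ 2) := by
      obtain ⟨m, hm⟩ := h2k
      exact ⟨m, by rw [hk]; linear_combination (X * (X + 1)) * hm⟩
    have hD : Y - X ^ 2 = 0 := by
      by_contra hne
      have h2ne : 2 * (Y - X ^ 2) ≠ 0 := by
        intro h; exact hne (by linarith [mul_eq_zero.mp h])
      have habs : X * (X + 1) * (X + 2) ≤ |2 * (Y - X ^ 2)| :=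
        Int.le_of_dvd (abs_pos.mpr h2ne) ((dvd_abs _ _).mpr dprod)
      have ht : (0 : ℤ) ≤ X - 2 := by linarith
      have ht2 : (0 : ℤ) ≤ (X - 2) * (X - 2) := mul_nonneg ht ht
      have ht3 : (0 : ℤ) ≤ (X - 2) * (X - 2) * (X - 2) := mul_nonneg ht2 ht
      have hY4 : Y ≤ 4 * X ^ 2 - 1 := by omega
      rcases lt_or_gt_of_ne hne with hlt | hgt
      · have hle : Y - X ^ 2 ≤ -1 := by omega
        rcases abs_cases (2 * (Y - X ^ 2)) with ⟨he, hsc⟩ | ⟨he, hsc⟩ <;>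
          rw [he] at habs <;> nlinarith [ht, ht2, ht3]
      · have hge : 1 ≤ Y - X ^ 2 := by omega
        rcases abs_cases (2 * (Y - X ^ 2)) with ⟨he, hsc⟩ | ⟨he, hsc⟩ <;>
          rw [he] at habs <;> nlinarith [ht, ht2, ht3]
    have hYX : (y : ℤ) = (x : ℤ) ^ 2 := by rw [← hY, ← hX]; linarith
    exact_mod_cast hYX
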